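/- Sum form of Gupta's formula: take r_{(j)} := r_{i_j}, the sign-coherent vectors c_j^+ and ĉ_j^+ := B_0·c_j^+ from the generalized cluster pattern, and m_{l,j} := (ĉ_l^+, −d_{(j)}·c_j)_{D_0R}, assumed integers; assume also each h_j := −(g_K, d_{(j)}·c_j)_{D_0R} is an integer, where g_K := g_{i_K;K}. Then for every N ∈ ℕ^n the coefficient of u^N in ∏_{j=1}^K L_j^{h_j} (which represents the F-polynomial F_{i_K;t_K}(ŷ,z), with u_i in place of ŷ_i, by Gupta's formula) equals the sum, over all families of nonnegative integers (n_s^j)_{1 ≤ j ≤ K, 0 ≤ s ≤ r_{(j)}} with ∑_{j=1}^K (∑_{s=1}^{r_{(j)}} s·n_s^j)·c_j^+ = N, of ∏_{j=1}^K ( {h_j + ∑_{l=j+1}^K ∑_{s=1}^{r_{(l)}} s·n_s^l·m_{l,j} ; n_0^j, n_1^j, …, n_{r_{(j)}}^j} · ∏_{s=1}^{r_{(j)}} z_{j,s}^{n_s^j} ). -/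

import Mathlib

open Classical

noncomputable section

/-- The generalized binomial coefficient `C(h,m) = h(h-1)⋯(h-m+1)/m!` for `h ∈ ℤ`
(the division is exact). -/
def intChoose (h : ℤ) (m : ℕ) : ℤ :=
  (∏ j ∈ Finset.range m, (h - (j : ℤ))) / (m.factorial : ℤ)

/-- The bracket `{h; n_0, n_1, …, n_p} = C(h,n_0)·M(n_0; n_1,…,n_p)`, where
`M(n_0; n_1,…,n_p) = n_0!/(n_1!⋯n_p!)` if `n_0 = n_1+⋯+n_p` and `0` otherwise. -/
def gbracket (h : ℤ) (p : ℕ) (ns : ℕ → ℕ) : ℤ :=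
  if ns 0 = ∑ s ∈ Finset.Icc 1 p, ns s then
    intChoose h (ns 0) * Nat.multinomial (Finset.Icc 1 p) ns
  else 0

/-- The coefficient ring `A = ℚ[z_{j,s} : 1 ≤ j ≤ K, 1 ≤ s ≤ r_{(j)}-1]`. -/
abbrev ZRing (K : ℕ) (rr : Fin K → ℕ) : Type :=
  MvPolynomial ((j : Fin K) × Fin (rr j - 1)) ℚ

/-- `z_{j,s}` for `0 ≤ s ≤ r_{(j)}`, with the convention `z_{j,0} = z_{j,r_{(j)}} = 1`. -/
def zpoly {K : ℕ} (rr : Fin K → ℕ) (j : Fin K) (s : ℕ) : ZRing K rr :=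
  if h : 0 < s ∧ s < rr j then MvPolynomial.X ⟨j, ⟨s - 1, by omega⟩⟩ else 1

lemma descPochhammer_int_eval_eq_prod (h : ℤ) (m : ℕ) :
    (descPochhammer ℤ m).eval h = ∏ j ∈ Finset.range m, (h - (j : ℤ)) := by
  induction m with
  | zero => simp
  | succ m ih => rw [descPochhammer_succ_eval, ih, Finset.prod_range_succ]

lemma intChoose_eq_ring_choose (h : ℤ) (m : ℕ) :
    intChoose h m = Ring.choose h m := by
  have h1 := Ring.descPochhammer_eq_factorial_smul_choose (R := ℤ) h m
  rw [← Polynomial.eval_eq_smeval, descPochhammer_int_eval_eq_prod] at h1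
  rw [intChoose, h1, nsmul_eq_mul]
  exact Int.mul_ediv_cancel_left _ (by exact_mod_cast m.factorial_ne_zero)

lemma intChoose_zero_right (h : ℤ) : intChoose h 0 = 1 := by simp [intChoose]

lemma intChoose_pascal (h : ℤ) (m : ℕ) :
    intChoose (h + 1) (m + 1) = intChoose h m + intChoose h (m + 1) := by
  simp only [intChoose_eq_ring_choose]
  exact Ring.choose_succ_succ h m

lemma intChoose_zero_left (m : ℕ) : intChoose 0 m = if m = 0 then 1 else 0 := by
  cases m with
  | zero => simp [intChoose]
  | succ m =>
    simp only [Nat.succ_ne_zero, if_false, intChoose]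
    rw [Finset.prod_eq_zero (Finset.mem_range.2 (Nat.succ_pos m)) (by simp)]
    simp


namespace Aux17

open MvPowerSeries Finset

variable {σ : Type*} {R : Type*} [CommRing R]

def deg (P : σ →₀ ℕ) : ℕ := P.sum fun _ v => v

lemma deg_add (p q : σ →₀ ℕ) : deg (p + q) = deg p + deg q := by
  simpa [deg] using Finsupp.sum_add_index' (by simp) (by simp)

lemma deg_eq_zero_iff (p : σ →₀ ℕ) : deg p = 0 ↔ p = 0 := by
  constructor
  · intro h
    rw [deg, Finsupp.sum, Finset.sum_eq_zero_iff] at h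
    ext a
    by_cases hmem : a ∈ p.support
    · exact h a hmem
    · simpa using (Finsupp.notMem_support_iff.1 hmem)
  · intro h; simp [h, deg]

lemma one_le_deg {p : σ →₀ ℕ} (h : p ≠ 0) : 1 ≤ deg p := by
  rcases Nat.eq_zero_or_pos (deg p) with h0 | h1
  · exact absurd ((deg_eq_zero_iff p).1 h0) h
  · exact h1

lemma coeff_pow_eq_zero {x : MvPowerSeries σ R} (hx : constantCoeff x = 0) :
    ∀ (m : ℕ) (P : σ →₀ ℕ), deg P < m → coeff P (x ^ m) = 0 := by
  intro m
  induction m with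
  | zero => intro P h; omega
  | succ m ih =>
    intro P h
    rw [pow_succ', coeff_mul]
    refine Finset.sum_eq_zero fun p hp => ?_
    rcases eq_or_ne p.1 0 with h1 | h1
    · have : coeff p.1 x = 0 := by rw [h1]; exact hx
      rw [this, zero_mul]
    · have hPsum : p.1 + p.2 = P := Finset.HasAntidiagonal.mem_antidiagonal.1 hp
      have : deg p.2 < m := by
        have := deg_add p.1 p.2
        have h2 := one_le_deg h1
        rw [hPsum] at this
        omega
      rw [ih p.2 this, mul_zero]

lemma coeff_mul_congr {Y U T : MvPowerSeries σ R} {P : σ →₀ ℕ}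
    (h : ∀ q ≤ P, coeff q U = coeff q T) :
    coeff P (Y * U) = coeff P (Y * T) := by
  rw [coeff_mul, coeff_mul]
  refine Finset.sum_congr rfl fun p hp => ?_
  have hPsum : p.1 + p.2 = P := Finset.HasAntidiagonal.mem_antidiagonal.1 hp
  rw [h p.2 (by rw [← hPsum]; exact le_add_self)]

/-- The formal expansion of `u^h` where `u = 1 + x`, `x` without constant term. -/
def binExp (x : MvPowerSeries σ R) (h : ℤ) : MvPowerSeries σ R :=
  fun P => ∑ m ∈ Finset.range (deg P + 1), (intChoose h m : R) * coeff P (x ^ m)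

lemma coeff_binExp (x : MvPowerSeries σ R) (h : ℤ) (P : σ →₀ ℕ) :
    coeff P (binExp x h) =
      ∑ m ∈ Finset.range (deg P + 1), (intChoose h m : R) * coeff P (x ^ m) := rfl

lemma coeff_binExp_ext {x : MvPowerSeries σ R} (hx : constantCoeff x = 0) (h : ℤ)
    (P : σ →₀ ℕ) {M : ℕ} (hM : deg P < M) :
    coeff P (binExp x h) =
      ∑ m ∈ Finset.range M, (intChoose h m : R) * coeff P (x ^ m) := by
  rw [coeff_binExp]
  refine Finset.sum_subset (by intro m hm; simp only [Finset.mem_range] at *; omega) ?_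
  intro m hm hm'
  simp only [Finset.mem_range] at hm hm'
  rw [coeff_pow_eq_zero hx m P (by omega), mul_zero]

lemma binExp_mul (x : MvPowerSeries σ R) (hx : constantCoeff x = 0) (h : ℤ) :
    binExp x h * (1 + x) = binExp x (h + 1) := by
  ext P
  have hD : deg P = deg P := rfl
  set D := deg P with hDdef
  have key : coeff P (binExp x h * x) =
      ∑ m ∈ Finset.range (D + 1), (intChoose h m : R) * coeff P (x ^ (m + 1)) := by
    rw [coeff_mul]
    have step : ∀ p ∈ antidiagonal P,
        coeff p.1 (binExp x h) * coeff p.2 x =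
        ∑ m ∈ Finset.range (D + 1), (intChoose h m : R) * (coeff p.1 (x ^ m) * coeff p.2 x) := by
      intro p hp
      have hPsum : p.1 + p.2 = P := Finset.HasAntidiagonal.mem_antidiagonal.1 hp
      have hdeg : deg p.1 < D + 1 := by
        have := deg_add p.1 p.2; rw [hPsum] at this; omega
      rw [coeff_binExp_ext hx h p.1 hdeg, Finset.sum_mul]
      simp [mul_assoc]
    rw [Finset.sum_congr rfl step, Finset.sum_comm]
    refine Finset.sum_congr rfl fun m _ => ?_
    rw [← Finset.mul_sum, pow_succ, coeff_mul]
  rw [mul_add, mul_one, map_add, key, coeff_binExp, coeff_binExp]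
  -- now a pure finite-sum identity
  have hlast : coeff P (x ^ (D + 1)) = 0 := coeff_pow_eq_zero hx _ _ (by omega)
  rw [Finset.sum_range_succ (fun m => (intChoose h m : R) * coeff P (x ^ (m + 1))) D]
  rw [hlast, mul_zero, add_zero]
  rw [Finset.sum_range_succ' (fun m => (intChoose (h+1) m : R) * coeff P (x ^ m)) D]
  rw [Finset.sum_range_succ' (fun m => (intChoose h m : R) * coeff P (x ^ m)) D]
  simp only [intChoose_zero_right, intChoose_pascal, Int.cast_add, Int.cast_one]
  rw [add_right_comm, ← Finset.sum_add_distrib]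
  congr 1
  refine Finset.sum_congr rfl fun m _ => ?_
  push_cast
  ring

lemma binExp_zero (x : MvPowerSeries σ R) : binExp x 0 = 1 := by
  ext P
  rw [coeff_binExp]
  have : ∀ m ∈ Finset.range (deg P + 1), (intChoose 0 m : R) * coeff P (x ^ m)
      = if m = 0 then coeff P 1 else 0 := by
    intro m _
    rw [intChoose_zero_left]
    split_ifs with h
    · subst h; simp
    · simp
  rw [Finset.sum_congr rfl this, Finset.sum_ite_eq' (Finset.range (deg P + 1)) 0]
  simp

lemma binExp_spec {x : MvPowerSeries σ R} (hx : constantCoeff x = 0)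
    (u : (MvPowerSeries σ R)ˣ) (hu : (u : MvPowerSeries σ R) = 1 + x) (h : ℤ) :
    ((u ^ h : (MvPowerSeries σ R)ˣ) : MvPowerSeries σ R) = binExp x h := by
  have key : ∀ (k : ℕ) (g : ℤ), binExp x g * ((u : MvPowerSeries σ R)) ^ k = binExp x (g + k) := by
    intro k
    induction k with
    | zero => intro g; simp
    | succ k ih =>
      intro g
      rw [pow_succ, ← mul_assoc, ih g, hu, binExp_mul x hx]
      rw [show g + (k : ℤ) + 1 = g + ((k : ℕ) + 1 : ℕ) by push_cast; ring]
  rcases h.eq_nat_or_neg with ⟨k, hk | hk⟩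
  · subst hk
    rw [zpow_natCast]
    have := key k 0
    rw [binExp_zero, one_mul, zero_add] at this
    rw [← this, Units.val_pow_eq_pow_val]
  · subst hk
    have h1 : binExp x (-(k : ℤ)) * ((u : MvPowerSeries σ R)) ^ k = 1 := by
      rw [key k (-(k:ℤ)), neg_add_cancel, binExp_zero]
    have h2 : ((u ^ (-(k : ℤ)) : (MvPowerSeries σ R)ˣ) : MvPowerSeries σ R)
        * ((u : MvPowerSeries σ R)) ^ k = 1 := by
      rw [← Units.val_pow_eq_pow_val, ← Units.val_mul, zpow_neg, zpow_natCast,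
        inv_mul_cancel, Units.val_one]
    calc ((u ^ (-(k : ℤ)) : (MvPowerSeries σ R)ˣ) : MvPowerSeries σ R)
        = ((u ^ (-(k : ℤ)) : (MvPowerSeries σ R)ˣ) : MvPowerSeries σ R)
            * (binExp x (-(k : ℤ)) * ((u : MvPowerSeries σ R)) ^ k) := by rw [h1, mul_one]
      _ = binExp x (-(k : ℤ)) * (((u ^ (-(k : ℤ)) : (MvPowerSeries σ R)ˣ) : MvPowerSeries σ R)
            * ((u : MvPowerSeries σ R)) ^ k) := by ring
      _ = binExp x (-(k : ℤ)) := by rw [h2, mul_one]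

end Aux17

namespace Aux17
open MvPowerSeries Finset

section Main

variable {n K : ℕ} (rr : Fin K → ℕ) {A : Type*} [CommRing A]
  (z : Fin K → ℕ → A) (cp : Fin K → Fin n → ℕ) (mm : Fin K → Fin K → ℤ)

/-- embed a function `Fin n → ℕ` as a finsupp -/
def ee (N : Fin n → ℕ) : Fin n →₀ ℕ := Finsupp.equivFunOnFinite.symm N

@[simp] lemma ee_apply (N : Fin n → ℕ) (i : Fin n) : ee N i = N i := rfl

lemma deg_ee (N : Fin n → ℕ) : deg (ee N) = ∑ i, N i := by
  rw [deg, Finsupp.sum_fintype]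
  · rfl
  · intro _; rfl

lemma ee_le_iff (v w : Fin n → ℕ) : ee v ≤ ee w ↔ ∀ i, v i ≤ w i := by
  rw [Finsupp.le_def]; rfl

lemma ee_sub (v w : Fin n → ℕ) : ee w - ee v = ee (fun i => w i - v i) := by
  ext i; simp [Finsupp.tsub_apply]

lemma smul_ee (σ : ℕ) (v : Fin n → ℕ) : σ • ee v = ee (fun i => σ * v i) := by
  ext i; simp

lemma ee_eq_zero_iff (v : Fin n → ℕ) : ee v = 0 ↔ ∀ i, v i = 0 := by
  constructor
  · intro h i
    have := congrArg (fun (g : Fin n →₀ ℕ) => g i) h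
    simpa using this
  · intro h
    ext i; simpa using h i

def sig (r : ℕ) (g : ℕ → ℕ) : ℕ := ∑ s ∈ Finset.Icc 1 r, s * g s

def sigZ (r : ℕ) (g : ℕ → ℕ) : ℤ := ∑ s ∈ Finset.Icc 1 r, (s : ℤ) * (g s : ℤ)

lemma sigZ_eq (r : ℕ) (g : ℕ → ℕ) : sigZ r g = (sig r g : ℤ) := by
  rw [sig, sigZ, Nat.cast_sum]
  exact Finset.sum_congr rfl fun s _ => by push_cast; ring

def Wcond (t : ℕ) (N : Fin n → ℕ) (f : Fin K → ℕ → ℕ) : Prop :=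
  (∀ j s, rr j < s → f j s = 0) ∧ (∀ j : Fin K, t ≤ (j : ℕ) → ∀ s, f j s = 0) ∧
    (∀ i, ∑ j, sig (rr j) (f j) * cp j i = N i)

def Wval (t : ℕ) (H : Fin K → ℤ) (f : Fin K → ℕ → ℕ) : A :=
  ∏ j ∈ univ.filter (fun j : Fin K => (j : ℕ) < t),
    ((gbracket (H j + ∑ l ∈ univ.filter (fun l : Fin K => j < l), sigZ (rr l) (f l) * mm l j)
        (rr j) (f j) : ℤ) : A) * ∏ s ∈ Finset.Icc 1 (rr j), z j s ^ f j s

def W (t : ℕ) (H : Fin K → ℤ) (N : Fin n → ℕ) (f : Fin K → ℕ → ℕ) : A :=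
  if Wcond rr cp t N f then Wval rr z mm t H f else 0

lemma W_delta {t : ℕ} {H : Fin K → ℤ} {N : Fin n → ℕ} {f : Fin K → ℕ → ℕ}
    (hne : W rr z cp mm t H N f ≠ 0) {j : Fin K} (hj : (j : ℕ) < t) :
    f j 0 = ∑ s ∈ Finset.Icc 1 (rr j), f j s := by
  by_contra hδ
  apply hne
  rw [W]
  split_ifs with hc
  · refine Finset.prod_eq_zero (Finset.mem_filter.2 ⟨Finset.mem_univ j, hj⟩) ?_
    rw [gbracket, if_neg hδ]
    simp
  · rfl

lemma W_cond_of_ne {t : ℕ} {H : Fin K → ℤ} {N : Fin n → ℕ} {f : Fin K → ℕ → ℕ}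
    (hne : W rr z cp mm t H N f ≠ 0) : Wcond rr cp t N f := by
  by_contra hc
  exact hne (if_neg hc)

lemma sig_le_of_cond (hcp : ∀ j, ∃ i, cp j i ≠ 0) {t : ℕ} {N : Fin n → ℕ}
    {f : Fin K → ℕ → ℕ} (h : Wcond rr cp t N f) (j : Fin K) :
    sig (rr j) (f j) ≤ ∑ i, N i := by
  obtain ⟨i₀, hi₀⟩ := hcp j
  have h1 : sig (rr j) (f j) ≤ sig (rr j) (f j) * cp j i₀ :=
    Nat.le_mul_of_pos_right _ (Nat.pos_of_ne_zero hi₀)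
  have h2 : sig (rr j) (f j) * cp j i₀ ≤ ∑ j', sig (rr j') (f j') * cp j' i₀ :=
    Finset.single_le_sum (f := fun j' => sig (rr j') (f j') * cp j' i₀)
      (fun _ _ => Nat.zero_le _) (Finset.mem_univ j)
  have h3 : (∑ j', sig (rr j') (f j') * cp j' i₀) = N i₀ := h.2.2 i₀
  have h4 : N i₀ ≤ ∑ i, N i :=
    Finset.single_le_sum (f := fun i => N i) (fun _ _ => Nat.zero_le _) (Finset.mem_univ i₀)
  omega

def famSet (N : Fin n → ℕ) : Finset (Fin K → ℕ → ℕ) :=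
  (Finset.univ :
      Finset (Fin K → Fin ((Finset.univ : Finset (Fin K)).sup rr + 1) → Fin ((∑ i, N i) + 1))).image
    (fun t j s =>
      if h : s < (Finset.univ : Finset (Fin K)).sup rr + 1 then (t j ⟨s, h⟩ : ℕ) else 0)

lemma mem_famSet {N : Fin n → ℕ} {f : Fin K → ℕ → ℕ}
    (h1 : ∀ (j : Fin K) (s : ℕ), (Finset.univ : Finset (Fin K)).sup rr < s → f j s = 0)
    (h2 : ∀ (j : Fin K) (s : ℕ), f j s ≤ ∑ i, N i) : f ∈ famSet rr N := by
  rw [famSet, Finset.mem_image]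
  refine ⟨fun j s => ⟨f j (s : ℕ), Nat.lt_succ_of_le (h2 j s)⟩, Finset.mem_univ _, ?_⟩
  funext j s
  by_cases hs : s < (Finset.univ : Finset (Fin K)).sup rr + 1
  · rw [dif_pos hs]
  · rw [dif_neg hs]
    exact (h1 j s (by omega)).symm

lemma W_supp (hcp : ∀ j, ∃ i, cp j i ≠ 0) (N : Fin n → ℕ) {t : ℕ} {H : Fin K → ℤ}
    {N' : Fin n → ℕ} (hle : ∀ i, N' i ≤ N i) {f : Fin K → ℕ → ℕ}
    (hne : W rr z cp mm t H N' f ≠ 0) : f ∈ famSet rr N := by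
  have hc := W_cond_of_ne rr z cp mm hne
  have hNN : (∑ i, N' i) ≤ ∑ i, N i := Finset.sum_le_sum fun i _ => hle i
  have hsig : ∀ j, sig (rr j) (f j) ≤ ∑ i, N i := fun j =>
    le_trans (sig_le_of_cond rr cp hcp hc j) hNN
  have hzero : ∀ (j : Fin K), f j 0 ≤ ∑ i, N i := by
    intro j
    rcases lt_or_ge (j : ℕ) t with hj | hj
    · have hδ := W_delta rr z cp mm hne hj
      have : (∑ s ∈ Finset.Icc 1 (rr j), f j s) ≤ sig (rr j) (f j) := by
        refine Finset.sum_le_sum fun s hs => ?_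
        have : 1 ≤ s := (Finset.mem_Icc.1 hs).1
        exact Nat.le_mul_of_pos_left _ (by omega)
      have := hsig j
      omega
    · rw [hc.2.1 j hj 0]
      exact Nat.zero_le _
  refine mem_famSet rr ?_ ?_
  · intro j s hs
    refine hc.1 j s (lt_of_le_of_lt ?_ hs)
    exact Finset.le_sup (Finset.mem_univ j)
  · intro j s
    rcases Nat.eq_zero_or_pos s with rfl | hs
    · exact hzero j
    rcases le_or_gt s (rr j) with hsr | hsr
    · have hmem : s ∈ Finset.Icc 1 (rr j) := Finset.mem_Icc.2 ⟨hs, hsr⟩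
      have : s * f j s ≤ sig (rr j) (f j) :=
        Finset.single_le_sum (f := fun s => s * f j s) (fun _ _ => Nat.zero_le _) hmem
      have := hsig j
      have hle2 : f j s ≤ s * f j s := Nat.le_mul_of_pos_left _ hs
      omega
    · rw [hc.1 j s hsr]
      exact Nat.zero_le _

end Main
end Aux17

namespace Aux17
open MvPowerSeries Finset

section Main2

variable {n K : ℕ} (rr : Fin K → ℕ) {A : Type*} [CommRing A]
  (z : Fin K → ℕ → A) (cp : Fin K → Fin n → ℕ) (mm : Fin K → Fin K → ℤ)

lemma famSet_spec {N : Fin n → ℕ} {f : Fin K → ℕ → ℕ} (h : f ∈ famSet rr N) :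
    (∀ (j : Fin K) (s : ℕ), (Finset.univ : Finset (Fin K)).sup rr < s → f j s = 0) ∧
      ∀ (j : Fin K) (s : ℕ), f j s ≤ ∑ i, N i := by
  rw [famSet, Finset.mem_image] at h
  obtain ⟨t, -, rfl⟩ := h
  dsimp only
  constructor
  · intro j s hs
    rw [dif_neg (by omega)]
  · intro j s
    by_cases hs : s < (Finset.univ : Finset (Fin K)).sup rr + 1
    · rw [dif_pos hs]
      exact Nat.lt_succ_iff.1 (t j ⟨s, hs⟩).isLt
    · rw [dif_neg hs]
      exact Nat.zero_le _

/-- shifted exponents -/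
def Hsh (H : Fin K → ℤ) (k : Fin K) (σv : ℕ) : Fin K → ℤ := fun j => H j + (σv : ℤ) * mm k j

/-- shifted target degree -/
def Nsh (N : Fin n → ℕ) (k : Fin K) (σv : ℕ) : Fin n → ℕ := fun i => N i - σv * cp k i

/-- rebuild the `k`-component from `(m, ν)` -/
def gfun (m : ℕ) (ν : ℕ → ℕ) : ℕ → ℕ := fun s => if s = 0 then m else ν s

def Term2 (H : Fin K → ℤ) (N : Fin n → ℕ) (k : Fin K) (m : ℕ) (ν : ℕ → ℕ)
    (f' : Fin K → ℕ → ℕ) : A :=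
  (intChoose (H k) m : A) * (Nat.multinomial (Finset.Icc 1 (rr k)) ν : A) *
    (∏ s ∈ Finset.Icc 1 (rr k), z k s ^ ν s) *
    (if ∀ i, sig (rr k) ν * cp k i ≤ N i then
      W rr z cp mm (k : ℕ) (Hsh mm H k (sig (rr k) ν)) (Nsh cp N k (sig (rr k) ν)) f'
    else 0)

section StepData

variable (H : Fin K → ℤ) (N : Fin n → ℕ) (k : Fin K) {m : ℕ} {ν : ℕ → ℕ} {f' : Fin K → ℕ → ℕ}

lemma filter_succ_eq :
    (univ.filter fun j : Fin K => (j : ℕ) < (k : ℕ) + 1) =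
      insert k (univ.filter fun j : Fin K => (j : ℕ) < (k : ℕ)) := by
  ext j
  simp only [Finset.mem_filter, Finset.mem_insert, Finset.mem_univ, true_and, Fin.ext_iff]
  omega

lemma k_not_mem : k ∉ (univ.filter fun j : Fin K => (j : ℕ) < (k : ℕ)) := by simp

variable (hν : ν ∈ Finset.piAntidiag (Finset.Icc 1 (rr k)) m) (hfk : f' k = fun _ => 0)

include hν

lemma nu_sum : (∑ s ∈ Finset.Icc 1 (rr k), ν s) = m := (Finset.mem_piAntidiag.1 hν).1

lemma nu_supp : ∀ s, ν s ≠ 0 → s ∈ Finset.Icc 1 (rr k) := (Finset.mem_piAntidiag.1 hν).2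

lemma nu_zero : ν 0 = 0 := by
  by_contra h
  have := nu_supp rr k hν 0 h
  simp at this

lemma nu_high : ∀ s, rr k < s → ν s = 0 := by
  intro s hs
  by_contra h
  have := Finset.mem_Icc.1 (nu_supp rr k hν s h)
  omega

include hfk

lemma sig_update (j : Fin K) :
    sig (rr j) (Function.update f' k (gfun m ν) j) =
      sig (rr j) (f' j) + (if j = k then sig (rr k) ν else 0) := by
  by_cases hj : j = k
  · subst hj
    rw [if_pos rfl, Function.update_self, hfk]
    simp only [sig]
    rw [show (∑ s ∈ Finset.Icc 1 (rr j), s * (fun _ => 0 : ℕ → ℕ) s) = 0 by simp]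
    rw [zero_add]
    refine Finset.sum_congr rfl fun s hs => ?_
    have h1 : 1 ≤ s := (Finset.mem_Icc.1 hs).1
    rw [gfun, if_neg (by omega)]
  · rw [if_neg hj, Function.update_of_ne hj, add_zero]

lemma sigZ_update (j : Fin K) :
    sigZ (rr j) (Function.update f' k (gfun m ν) j) =
      sigZ (rr j) (f' j) + (if j = k then ((sig (rr k) ν : ℤ)) else 0) := by
  rw [sigZ_eq, sigZ_eq, sig_update rr k hν hfk j]
  split_ifs <;> push_cast <;> ring

lemma sum_sig_update (i : Fin n) :
    (∑ j, sig (rr j) (Function.update f' k (gfun m ν) j) * cp j i) =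
      sig (rr k) ν * cp k i + ∑ j, sig (rr j) (f' j) * cp j i := by
  have : ∀ j ∈ (univ : Finset (Fin K)),
      sig (rr j) (Function.update f' k (gfun m ν) j) * cp j i =
        sig (rr j) (f' j) * cp j i + (if j = k then sig (rr k) ν * cp k i else 0) := by
    intro j _
    rw [sig_update rr k hν hfk j]
    split_ifs with h
    · subst h; ring
    · ring
  rw [Finset.sum_congr rfl this, Finset.sum_add_distrib, Finset.sum_ite_eq' univ k
    (fun _ => sig (rr k) ν * cp k i), if_pos (Finset.mem_univ k)]
  ring

lemma wcond_iff (hm : m ≤ ∑ i, N i) :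
    Wcond rr cp ((k : ℕ) + 1) N (Function.update f' k (gfun m ν)) ↔
      (∀ i, sig (rr k) ν * cp k i ≤ N i) ∧
        Wcond rr cp (k : ℕ) (Nsh cp N k (sig (rr k) ν)) f' := by
  constructor
  · rintro ⟨c1, c2, c3⟩
    have c3' : ∀ i, sig (rr k) ν * cp k i + ∑ j, sig (rr j) (f' j) * cp j i = N i := by
      intro i
      rw [← c3 i, sum_sig_update rr cp k hν hfk i]
    refine ⟨fun i => by have := c3' i; omega, ?_, ?_, fun i => by have := c3' i; simp only [Nsh]; omega⟩
    · intro j s hs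
      by_cases hj : j = k
      · subst hj; rw [hfk]
      · have := c1 j s hs
        rwa [Function.update_of_ne hj] at this
    · intro j hj s
      by_cases hjk : j = k
      · subst hjk; rw [hfk]
      · have hj1 : (k : ℕ) + 1 ≤ (j : ℕ) := by
          rcases Nat.lt_or_ge (j : ℕ) ((k : ℕ) + 1) with h | h
          · exact absurd (Fin.ext (by omega)) hjk
          · exact h
        have := c2 j hj1 s
        rwa [Function.update_of_ne hjk] at this
  · rintro ⟨hle, c1, c2, c3⟩
    refine ⟨?_, ?_, ?_⟩
    · intro j s hs
      by_cases hj : j = k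
      · subst hj
        rw [Function.update_self, gfun, if_neg (by omega)]
        exact nu_high rr j hν s hs
      · rw [Function.update_of_ne hj]
        exact c1 j s hs
    · intro j hj s
      have hjk : j ≠ k := fun h => by subst h; omega
      rw [Function.update_of_ne hjk]
      exact c2 j (by omega) s
    · intro i
      rw [sum_sig_update rr cp k hν hfk i, c3 i]
      have := hle i
      simp only [Nsh]
      omega

end StepData

end Main2
end Aux17

namespace Aux17
open MvPowerSeries Finset

section Main3

variable {n K : ℕ} (rr : Fin K → ℕ) {A : Type*} [CommRing A]
  (z : Fin K → ℕ → A) (cp : Fin K → Fin n → ℕ) (mm : Fin K → Fin K → ℤ)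
  (H : Fin K → ℤ) (N : Fin n → ℕ) (k : Fin K) {m : ℕ} {ν : ℕ → ℕ} {f' : Fin K → ℕ → ℕ}

lemma wval_update (hν : ν ∈ Finset.piAntidiag (Finset.Icc 1 (rr k)) m)
    (hfk : f' k = fun _ => 0)
    (hC2 : ∀ j : Fin K, (k : ℕ) + 1 ≤ (j : ℕ) → ∀ s, Function.update f' k (gfun m ν) j s = 0) :
    Wval rr z mm ((k : ℕ) + 1) H (Function.update f' k (gfun m ν)) =
      (intChoose (H k) m : A) * (Nat.multinomial (Finset.Icc 1 (rr k)) ν : A) *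
        (∏ s ∈ Finset.Icc 1 (rr k), z k s ^ ν s) *
        Wval rr z mm (k : ℕ) (Hsh mm H k (sig (rr k) ν)) f' := by
  have hzs : (∑ l ∈ univ.filter (fun l : Fin K => k < l),
      sigZ (rr l) (Function.update f' k (gfun m ν) l) * mm l k) = 0 := by
    refine Finset.sum_eq_zero fun l hl => ?_
    have hkl : k < l := (Finset.mem_filter.1 hl).2
    have hl1 : (k : ℕ) + 1 ≤ (l : ℕ) := hkl
    have : sigZ (rr l) (Function.update f' k (gfun m ν) l) = 0 := by
      rw [sigZ]
      refine Finset.sum_eq_zero fun s _ => ?_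
      rw [hC2 l hl1 s]
      simp
    rw [this, zero_mul]
  have hgb : gbracket (H k) (rr k) (Function.update f' k (gfun m ν) k) =
      intChoose (H k) m * Nat.multinomial (Finset.Icc 1 (rr k)) ν := by
    rw [Function.update_self]
    have hδ : gfun m ν 0 = ∑ s ∈ Finset.Icc 1 (rr k), gfun m ν s := by
      rw [show gfun m ν 0 = m from if_pos rfl]
      rw [← nu_sum rr k hν]
      refine Finset.sum_congr rfl fun s hs => ?_
      have h1 : 1 ≤ s := (Finset.mem_Icc.1 hs).1
      rw [gfun, if_neg (by omega)]
    have h0 : gfun m ν 0 = m := if_pos rfl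
    have hmult : Nat.multinomial (Finset.Icc 1 (rr k)) (gfun m ν) =
        Nat.multinomial (Finset.Icc 1 (rr k)) ν :=
      Nat.multinomial_congr fun s hs => by
        have h1 : 1 ≤ s := (Finset.mem_Icc.1 hs).1
        rw [gfun, if_neg (by omega)]
    rw [gbracket, if_pos hδ, h0, hmult]
  have hzp : (∏ s ∈ Finset.Icc 1 (rr k), z k s ^ (Function.update f' k (gfun m ν) k s)) =
      ∏ s ∈ Finset.Icc 1 (rr k), z k s ^ ν s := by
    rw [Function.update_self]
    refine Finset.prod_congr rfl fun s hs => ?_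
    have h1 : 1 ≤ s := (Finset.mem_Icc.1 hs).1
    rw [gfun, if_neg (by omega)]
  have hrest : (∏ j ∈ univ.filter (fun j : Fin K => (j : ℕ) < (k : ℕ)),
      ((gbracket (H j + ∑ l ∈ univ.filter (fun l : Fin K => j < l),
          sigZ (rr l) (Function.update f' k (gfun m ν) l) * mm l j)
          (rr j) (Function.update f' k (gfun m ν) j) : ℤ) : A)
        * ∏ s ∈ Finset.Icc 1 (rr j), z j s ^ (Function.update f' k (gfun m ν) j s)) =
      Wval rr z mm (k : ℕ) (Hsh mm H k (sig (rr k) ν)) f' := by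
    rw [Wval]
    refine Finset.prod_congr rfl fun j hj => ?_
    have hjk : (j : ℕ) < (k : ℕ) := (Finset.mem_filter.1 hj).2
    have hjne : j ≠ k := fun h => by subst h; omega
    have hkmem : k ∈ univ.filter (fun l : Fin K => j < l) :=
      Finset.mem_filter.2 ⟨Finset.mem_univ _, by
        rw [Fin.lt_def]; omega⟩
    have harg : H j + ∑ l ∈ univ.filter (fun l : Fin K => j < l),
        sigZ (rr l) (Function.update f' k (gfun m ν) l) * mm l j =
        Hsh mm H k (sig (rr k) ν) j + ∑ l ∈ univ.filter (fun l : Fin K => j < l),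
          sigZ (rr l) (f' l) * mm l j := by
      have hsplit : ∀ l ∈ univ.filter (fun l : Fin K => j < l),
          sigZ (rr l) (Function.update f' k (gfun m ν) l) * mm l j =
            sigZ (rr l) (f' l) * mm l j +
              (if l = k then ((sig (rr k) ν : ℤ)) * mm k j else 0) := by
        intro l _
        rw [sigZ_update rr k hν hfk l]
        split_ifs with h
        · subst h; ring
        · ring
      rw [Finset.sum_congr rfl hsplit, Finset.sum_add_distrib,
        Finset.sum_ite_eq' (univ.filter (fun l : Fin K => j < l)) k
          (fun _ => ((sig (rr k) ν : ℤ)) * mm k j), if_pos hkmem, Hsh]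
      ring
    rw [harg, Function.update_of_ne hjne]
  rw [Wval, filter_succ_eq k, Finset.prod_insert (k_not_mem k), hzs, add_zero, hgb, hzp, hrest]
  push_cast
  ring

lemma term2_eq (hm : m ≤ ∑ i, N i) (hν : ν ∈ Finset.piAntidiag (Finset.Icc 1 (rr k)) m)
    (hfk : f' k = fun _ => 0) :
    Term2 rr z cp mm H N k m ν f' =
      W rr z cp mm ((k : ℕ) + 1) H N (Function.update f' k (gfun m ν)) := by
  by_cases hC : Wcond rr cp ((k : ℕ) + 1) N (Function.update f' k (gfun m ν))
  · obtain ⟨hle, hC'⟩ := (wcond_iff rr cp N k hν hfk hm).1 hC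
    rw [Term2, W, if_pos hC', if_pos hle]
    conv_rhs => rw [W, if_pos hC]
    rw [wval_update rr z mm H k hν hfk hC.2.1]
  · conv_rhs => rw [W, if_neg hC]
    rw [Term2]
    by_cases hle : ∀ i, sig (rr k) ν * cp k i ≤ N i
    · rw [if_pos hle, W,
        if_neg (fun hC' => hC ((wcond_iff rr cp N k hν hfk hm).2 ⟨hle, hC'⟩)), mul_zero]
    · rw [if_neg hle, mul_zero]

lemma part2 (hcp : ∀ j, ∃ i, cp j i ≠ 0) :
    (∑ m ∈ Finset.range ((∑ i, N i) + 1), ∑ ν ∈ Finset.piAntidiag (Finset.Icc 1 (rr k)) m,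
      ∑ f' ∈ famSet rr N, Term2 rr z cp mm H N k m ν f') =
    ∑ᶠ f, W rr z cp mm ((k : ℕ) + 1) H N f := by
  classical
  -- right side over the explicit finite family, then restricted
  rw [finsum_eq_sum_of_support_subset _ (s := famSet rr N)
    (fun f hf => W_supp rr z cp mm hcp N (fun i => le_refl (N i)) hf)]
  have hQ : ∀ f ∈ famSet rr N, W rr z cp mm ((k : ℕ) + 1) H N f ≠ 0 →
      ((f k 0 = ∑ s ∈ Finset.Icc 1 (rr k), f k s) ∧
        f k 0 ≤ ∑ i, N i ∧ ∀ s, rr k < s → f k s = 0) := by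
    intro f _ hne
    have hc := W_cond_of_ne rr z cp mm hne
    have hδ : f k 0 = ∑ s ∈ Finset.Icc 1 (rr k), f k s :=
      W_delta rr z cp mm hne (by omega)
    refine ⟨hδ, ?_, fun s hs => hc.1 k s hs⟩
    have hb : (∑ s ∈ Finset.Icc 1 (rr k), f k s) ≤ sig (rr k) (f k) := by
      refine Finset.sum_le_sum fun s hs => ?_
      have h1 : 1 ≤ s := (Finset.mem_Icc.1 hs).1
      exact Nat.le_mul_of_pos_left _ (by omega)
    have := sig_le_of_cond rr cp hcp hc k
    omega
  conv_rhs => rw [← Finset.sum_filter_of_ne hQ]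
  -- left side as a single sum
  rw [Finset.sum_sigma' (Finset.range ((∑ i, N i) + 1))
      (fun m => Finset.piAntidiag (Finset.Icc 1 (rr k)) m)
      (fun m ν => ∑ f' ∈ famSet rr N, Term2 rr z cp mm H N k m ν f'),
    ← Finset.sum_product']
  have hP : ∀ p ∈ ((Finset.range ((∑ i, N i) + 1)).sigma
        (fun m => Finset.piAntidiag (Finset.Icc 1 (rr k)) m)) ×ˢ famSet rr N,
      Term2 rr z cp mm H N k p.1.1 p.1.2 p.2 ≠ 0 → (p.2 k = fun _ => 0) := by
    intro p _ hne
    have hW : W rr z cp mm (k : ℕ) (Hsh mm H k (sig (rr k) p.1.2))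
        (Nsh cp N k (sig (rr k) p.1.2)) p.2 ≠ 0 := by
      intro h0
      apply hne
      rw [Term2]
      split_ifs with h
      · rw [h0, mul_zero]
      · rw [mul_zero]
    have hc := W_cond_of_ne rr z cp mm hW
    funext s
    exact hc.2.1 k (le_refl _) s
  conv_lhs => rw [← Finset.sum_filter_of_ne hP]
  refine Finset.sum_nbij' (i := fun p => Function.update p.2 k (gfun p.1.1 p.1.2))
    (j := fun f => (⟨⟨f k 0, Function.update (f k) 0 0⟩, Function.update f k (fun _ => 0)⟩ :
      ((_ : ℕ) × (ℕ → ℕ)) × (Fin K → ℕ → ℕ)))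
    ?_ ?_ ?_ ?_ ?_
  · -- membership forward
    rintro ⟨⟨m, ν⟩, f'⟩ hp
    rw [Finset.mem_filter] at hp
    obtain ⟨hp1, hfk⟩ := hp
    rw [Finset.mem_product] at hp1
    obtain ⟨hmem, hf'⟩ := hp1
    rw [Finset.mem_sigma] at hmem
    obtain ⟨hm, hν⟩ := hmem
    rw [Finset.mem_range] at hm
    dsimp only at hfk hf' hm hν
    have hm' : m ≤ ∑ i, N i := by omega
    have hspec := famSet_spec rr hf'
    simp only [Finset.mem_filter]
    refine ⟨?_, ?_, ?_, ?_⟩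
    · -- in famSet
      refine mem_famSet rr ?_ ?_
      · intro j s hs
        by_cases hj : j = k
        · subst hj
          rw [Function.update_self, gfun,
            if_neg (by have := Finset.le_sup (f := rr) (Finset.mem_univ j); omega)]
          exact nu_high rr j hν s (by have := Finset.le_sup (f := rr) (Finset.mem_univ j); omega)
        · rw [Function.update_of_ne hj]
          exact hspec.1 j s hs
      · intro j s
        by_cases hj : j = k
        · subst hj
          rw [Function.update_self, gfun]
          split_ifs with h0
          · exact hm'
          · rcases Nat.eq_zero_or_pos (ν s) with h | h
            · omega
            · have hmem' : s ∈ Finset.Icc 1 (rr j) := nu_supp rr j hν s (by omega)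
              have : ν s ≤ ∑ s' ∈ Finset.Icc 1 (rr j), ν s' :=
                Finset.single_le_sum (f := fun s' => ν s') (fun _ _ => Nat.zero_le _) hmem'
              rw [nu_sum rr j hν] at this
              omega
        · rw [Function.update_of_ne hj]
          exact hspec.2 j s
    · -- delta at k
      rw [Function.update_self, show gfun m ν 0 = m from if_pos rfl, ← nu_sum rr k hν]
      refine Finset.sum_congr rfl fun s hs => ?_
      have h1 : 1 ≤ s := (Finset.mem_Icc.1 hs).1
      rw [gfun, if_neg (by omega)]
    · rw [Function.update_self, show gfun m ν 0 = m from if_pos rfl]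
      exact hm'
    · intro s hs
      rw [Function.update_self, gfun, if_neg (by omega)]
      exact nu_high rr k hν s hs
  · -- membership backward
    intro f hf
    rw [Finset.mem_filter] at hf
    obtain ⟨hfam, hδ, hb, hhigh⟩ := hf
    have hspec := famSet_spec rr hfam
    simp only [Finset.mem_filter, Finset.mem_product, Finset.mem_sigma, Finset.mem_range]
    refine ⟨⟨⟨by omega, ?_⟩, ?_⟩, ?_⟩
    · rw [Finset.mem_piAntidiag]
      constructor
      · have heq : (∑ s ∈ Finset.Icc 1 (rr k), Function.update (f k) 0 0 s) =
            ∑ s ∈ Finset.Icc 1 (rr k), f k s := by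
          refine Finset.sum_congr rfl fun s hs => ?_
          have h1 : 1 ≤ s := (Finset.mem_Icc.1 hs).1
          rw [Function.update_of_ne (by omega)]
        exact heq.trans hδ.symm
      · intro s hs
        rcases Nat.eq_zero_or_pos s with rfl | h1
        · rw [Function.update_self] at hs
          omega
        · rw [Function.update_of_ne (by omega)] at hs
          rw [Finset.mem_Icc]
          constructor
          · omega
          · by_contra h
            exact hs (hhigh s (by omega))
    · refine mem_famSet rr ?_ ?_
      · intro j s hs
        by_cases hj : j = k
        · subst hj; rw [Function.update_self]
        · rw [Function.update_of_ne hj]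
          exact hspec.1 j s hs
      · intro j s
        by_cases hj : j = k
        · subst hj; rw [Function.update_self]; exact Nat.zero_le _
        · rw [Function.update_of_ne hj]
          exact hspec.2 j s
    · rw [Function.update_self]
  · -- left inverse
    rintro ⟨⟨m, ν⟩, f'⟩ hp
    rw [Finset.mem_filter] at hp
    obtain ⟨hp1, hfk⟩ := hp
    rw [Finset.mem_product] at hp1
    obtain ⟨hmem, hf'⟩ := hp1
    rw [Finset.mem_sigma] at hmem
    obtain ⟨-, hν⟩ := hmem
    dsimp only at hfk hf' hν
    have e1 : Function.update f' k (gfun m ν) k 0 = m := by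
      rw [Function.update_self]; exact if_pos rfl
    have e2 : Function.update (Function.update f' k (gfun m ν) k) 0 0 = ν := by
      rw [Function.update_self]
      funext s
      rcases Nat.eq_zero_or_pos s with rfl | h1
      · rw [Function.update_self, nu_zero rr k hν]
      · rw [Function.update_of_ne (by omega), gfun, if_neg (by omega)]
    have e3 : Function.update (Function.update f' k (gfun m ν)) k (fun _ => 0) = f' := by
      rw [Function.update_idem, ← hfk, Function.update_eq_self]
    have e12 : (⟨Function.update f' k (gfun m ν) k 0,
        Function.update (Function.update f' k (gfun m ν) k) 0 0⟩ : (_ : ℕ) × (ℕ → ℕ)) =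
          ⟨m, ν⟩ := by rw [e1, e2]
    dsimp only
    rw [e12, e3]
  · -- right inverse
    intro f hf
    rw [Finset.mem_filter] at hf
    obtain ⟨hfam, hδ, hb, hhigh⟩ := hf
    dsimp only
    rw [Function.update_idem]
    funext j s
    by_cases hj : j = k
    · subst hj
      rw [Function.update_self, gfun]
      split_ifs with h0
      · subst h0; rfl
      · rw [Function.update_of_ne h0]
    · rw [Function.update_of_ne hj]
  · -- values
    rintro ⟨⟨m, ν⟩, f'⟩ hp
    rw [Finset.mem_filter] at hp
    obtain ⟨hp1, hfk⟩ := hp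
    rw [Finset.mem_product] at hp1
    obtain ⟨hmem, hf'⟩ := hp1
    rw [Finset.mem_sigma] at hmem
    obtain ⟨hm, hν⟩ := hmem
    rw [Finset.mem_range] at hm
    dsimp only at hfk hf' hm hν ⊢
    exact term2_eq rr z cp mm H N k (by omega) hν hfk

end Main3
end Aux17

namespace Aux17
open MvPowerSeries Finset

section Analytic

variable {σR : Type*} {A : Type*} [CommRing A]

lemma monomial_one_pow {n : ℕ} (v : Fin n →₀ ℕ) (p : ℕ) :
    (monomial (R := A) v (1 : A)) ^ p = monomial (R := A) (p • v) 1 := by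
  induction p with
  | zero => simp
  | succ p ih =>
    rw [pow_succ, ih, monomial_mul_monomial, one_mul, succ_nsmul]

lemma coeff_exp_prod {n : ℕ} (r : ℕ) (zz : ℕ → A) (hz0 : zz 0 = 1)
    (M : MvPowerSeries (Fin n) A) (hMc : constantCoeff M = 0)
    (u : (MvPowerSeries (Fin n) A)ˣ)
    (hu : (u : MvPowerSeries (Fin n) A) =
      ∑ s ∈ Finset.range (r + 1), C (σ := Fin n) (R := A) (zz s) * M ^ s)
    (Y : MvPowerSeries (Fin n) A) (h : ℤ) (P : Fin n →₀ ℕ) :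
    coeff P ((↑(u ^ h) : MvPowerSeries (Fin n) A) * Y) =
      ∑ m ∈ Finset.range (deg P + 1), (intChoose h m : A) *
        ∑ ν ∈ Finset.piAntidiag (Finset.Icc 1 r) m,
          (Nat.multinomial (Finset.Icc 1 r) ν : A) *
            coeff P (C (σ := Fin n) (R := A) (∏ s ∈ Finset.Icc 1 r, zz s ^ ν s) *
              (M ^ (sig r ν) * Y)) := by
  set x : MvPowerSeries (Fin n) A := ∑ s ∈ Finset.Icc 1 r, C (σ := Fin n) (R := A) (zz s) * M ^ s with hx
  have hx1 : (u : MvPowerSeries (Fin n) A) = 1 + x := by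
    rw [hu, Finset.sum_range_succ' (fun s => C (σ := Fin n) (R := A) (zz s) * M ^ s) r]
    have h0 : C (σ := Fin n) (R := A) (zz 0) * M ^ 0 = 1 := by rw [hz0, map_one, pow_zero, mul_one]
    have hred : (∑ i ∈ Finset.range r, C (σ := Fin n) (R := A) (zz (i + 1)) * M ^ (i + 1)) = x := by
      rw [hx, ← Finset.Ico_add_one_right_eq_Icc, Finset.sum_Ico_eq_sum_range]
      refine Finset.sum_congr rfl fun i _ => by rw [add_comm 1 i]
    rw [h0, hred, add_comm]
  have hxc : constantCoeff x = 0 := by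
    rw [hx, map_sum]
    refine Finset.sum_eq_zero fun s hs => ?_
    have h1 : 1 ≤ s := (Finset.mem_Icc.1 hs).1
    rw [map_mul, map_pow, hMc, zero_pow (by omega), mul_zero]
  -- replace `u^h` by the truncated binomial expansion
  set T : MvPowerSeries (Fin n) A :=
    ∑ m ∈ Finset.range (deg P + 1), C (σ := Fin n) (R := A) (intChoose h m : A) * x ^ m with hT
  have hagree : ∀ q ≤ P, coeff q (↑(u ^ h) : MvPowerSeries (Fin n) A) = coeff q T := by
    intro q hq
    have hdq : deg q < deg P + 1 := by
      obtain ⟨c, rfl⟩ := le_iff_exists_add.1 hq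
      have := deg_add q c
      omega
    rw [binExp_spec hxc u hx1 h, coeff_binExp_ext hxc h q hdq, hT, map_sum]
    refine Finset.sum_congr rfl fun m _ => ?_
    rw [coeff_C_mul]
  have h1 : coeff P ((↑(u ^ h) : MvPowerSeries (Fin n) A) * Y) = coeff P (Y * T) := by
    rw [mul_comm]
    exact coeff_mul_congr hagree
  rw [h1, hT, Finset.mul_sum, map_sum]
  refine Finset.sum_congr rfl fun m _ => ?_
  have hYm : Y * (C (σ := Fin n) (R := A) (intChoose h m : A) * x ^ m) =
      C (σ := Fin n) (R := A) (intChoose h m : A) * (x ^ m * Y) := by ring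
  rw [hYm, coeff_C_mul]
  congr 1
  -- multinomial expansion of x^m
  have hxm : x ^ m = ∑ ν ∈ Finset.piAntidiag (Finset.Icc 1 r) m,
      (Nat.multinomial (Finset.Icc 1 r) ν : MvPowerSeries (Fin n) A) *
        (C (σ := Fin n) (R := A) (∏ s ∈ Finset.Icc 1 r, zz s ^ ν s) * M ^ (sig r ν)) := by
    rw [hx, Finset.sum_pow_eq_sum_piAntidiag]
    refine Finset.sum_congr rfl fun ν hν => ?_
    congr 1
    rw [show (∏ i ∈ Finset.Icc 1 r, (C (σ := Fin n) (R := A) (zz i) * M ^ i) ^ ν i) =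
        (∏ i ∈ Finset.Icc 1 r, C (σ := Fin n) (R := A) (zz i ^ ν i)) * ∏ i ∈ Finset.Icc 1 r, M ^ (i * ν i) by
      rw [← Finset.prod_mul_distrib]
      exact Finset.prod_congr rfl fun i _ => by rw [mul_pow, map_pow, ← pow_mul]]
    rw [← map_prod, Finset.prod_pow_eq_pow_sum]
    rfl
  rw [hxm, Finset.sum_mul, map_sum]
  refine Finset.sum_congr rfl fun ν _ => ?_
  have : (Nat.multinomial (Finset.Icc 1 r) ν : MvPowerSeries (Fin n) A) *
        (C (σ := Fin n) (R := A) (∏ s ∈ Finset.Icc 1 r, zz s ^ ν s) * M ^ (sig r ν)) * Y =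
      C (σ := Fin n) (R := A) ((Nat.multinomial (Finset.Icc 1 r) ν : A)) *
        (C (σ := Fin n) (R := A) (∏ s ∈ Finset.Icc 1 r, zz s ^ ν s) * (M ^ (sig r ν) * Y)) := by
    rw [← map_natCast (C (σ := Fin n) (R := A)) (Nat.multinomial (Finset.Icc 1 r) ν)]
    ring
  rw [this, coeff_C_mul]

end Analytic
end Aux17

namespace Aux17
open MvPowerSeries Finset

section Claim

variable {n K : ℕ} (rr : Fin K → ℕ) {A : Type*} [CommRing A]
  (z : Fin K → ℕ → A) (cp : Fin K → Fin n → ℕ) (mm : Fin K → Fin K → ℤ)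
  (L : Fin K → (MvPowerSeries (Fin n) A)ˣ)

lemma claim_zero (H : Fin K → ℤ) (N : Fin n → ℕ) :
    coeff (ee N) ((↑(∏ j ∈ univ.filter (fun j : Fin K => (j : ℕ) < 0), L j ^ H j) :
        MvPowerSeries (Fin n) A)) = ∑ᶠ f, W rr z cp mm 0 H N f := by
  have hfil : (univ.filter fun j : Fin K => (j : ℕ) < 0) = (∅ : Finset (Fin K)) := by
    ext j; simp
  rw [hfil, Finset.prod_empty, Units.val_one, coeff_one]
  by_cases hN : ∀ i, N i = 0
  · rw [if_pos ((ee_eq_zero_iff N).2 hN)]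
    have hzero : ∀ f, f ≠ (fun _ _ => 0 : Fin K → ℕ → ℕ) → W rr z cp mm 0 H N f = 0 := by
      intro f hf
      rw [W, if_neg]
      rintro ⟨-, c2, -⟩
      exact hf (funext fun j => funext fun s => c2 j (Nat.zero_le _) s)
    rw [finsum_eq_single (fun f => W rr z cp mm 0 H N f) (fun _ _ => 0) hzero, W, if_pos]
    · rw [Wval, hfil, Finset.prod_empty]
    · exact ⟨fun j s _ => rfl, fun j _ s => rfl, fun i => by
        simpa [sig] using (hN i).symm⟩
  · rw [if_neg (fun h => hN fun i => by
      have := congrArg (fun g : Fin n →₀ ℕ => g i) h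
      simpa using this)]
    refine (finsum_eq_zero_of_forall_eq_zero fun f => ?_).symm
    rw [W, if_neg]
    rintro ⟨-, c2, c3⟩
    refine hN fun i => ?_
    rw [← c3 i]
    refine Finset.sum_eq_zero fun j _ => ?_
    have hfj : f j = fun _ => 0 := funext fun s => c2 j (Nat.zero_le _) s
    simp [sig, hfj]

lemma claim_step (hz0 : ∀ j, z j 0 = 1) (hcp : ∀ j, ∃ i, cp j i ≠ 0)
    (hL : ∀ l : Fin K, (L l : MvPowerSeries (Fin n) A) =
      ∑ s ∈ Finset.range (rr l + 1), C (σ := Fin n) (R := A) (z l s) *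
        (monomial (R := A) (Finsupp.equivFunOnFinite.symm (cp l)) 1 *
          ((∏ j ∈ Finset.univ.filter (fun j => j < l), L j ^ mm l j :
            (MvPowerSeries (Fin n) A)ˣ) : MvPowerSeries (Fin n) A)) ^ s)
    (k : Fin K)
    (IH : ∀ (H : Fin K → ℤ) (N : Fin n → ℕ),
      coeff (ee N) ((↑(∏ j ∈ univ.filter (fun j : Fin K => (j : ℕ) < (k : ℕ)), L j ^ H j) :
        MvPowerSeries (Fin n) A)) = ∑ᶠ f, W rr z cp mm (k : ℕ) H N f)
    (H : Fin K → ℤ) (N : Fin n → ℕ) :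
    coeff (ee N) ((↑(∏ j ∈ univ.filter (fun j : Fin K => (j : ℕ) < (k : ℕ) + 1), L j ^ H j) :
      MvPowerSeries (Fin n) A)) = ∑ᶠ f, W rr z cp mm ((k : ℕ) + 1) H N f := by
  have hM : ∃ M : MvPowerSeries (Fin n) A, M = monomial (R := A) (Finsupp.equivFunOnFinite.symm (cp k)) 1 *
      ((∏ j ∈ Finset.univ.filter (fun j => j < k), L j ^ mm k j :
        (MvPowerSeries (Fin n) A)ˣ) : MvPowerSeries (Fin n) A) := ⟨_, rfl⟩
  obtain ⟨M, hM⟩ := hM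
  have hu : (L k : MvPowerSeries (Fin n) A) =
      ∑ s ∈ Finset.range (rr k + 1), C (σ := Fin n) (R := A) (z k s) * M ^ s := by
    rw [hM]; exact hL k
  have hMc : constantCoeff M = 0 := by
    rw [hM, ← coeff_zero_eq_constantCoeff_apply, coeff_monomial_mul, if_neg]
    intro hle
    obtain ⟨i₀, hi₀⟩ := hcp k
    have h0 : Finsupp.equivFunOnFinite.symm (cp k) i₀ ≤ (0 : Fin n →₀ ℕ) i₀ :=
      Finsupp.le_def.1 hle i₀
    simp only [Finsupp.coe_zero, Pi.zero_apply, Finsupp.coe_equivFunOnFinite_symm] at h0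
    exact hi₀ (Nat.le_zero.1 h0)
  have hstep : ∀ σv : ℕ,
      M ^ σv * ((↑(∏ j ∈ univ.filter (fun j : Fin K => (j : ℕ) < (k : ℕ)), L j ^ H j) :
          MvPowerSeries (Fin n) A)) =
        monomial (R := A) (ee (fun i => σv * cp k i)) 1 *
          ((↑(∏ j ∈ univ.filter (fun j : Fin K => (j : ℕ) < (k : ℕ)),
            L j ^ (Hsh mm H k σv j)) : MvPowerSeries (Fin n) A)) := by
    intro σv
    have hU : (∏ j ∈ Finset.univ.filter (fun j => j < k), L j ^ mm k j) ^ σv *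
        (∏ j ∈ univ.filter (fun j : Fin K => (j : ℕ) < (k : ℕ)), L j ^ H j) =
        ∏ j ∈ univ.filter (fun j : Fin K => (j : ℕ) < (k : ℕ)), L j ^ (Hsh mm H k σv j) := by
      have hfil2 : (Finset.univ.filter fun j : Fin K => j < k) =
          (univ.filter fun j : Fin K => (j : ℕ) < (k : ℕ)) := by
        ext j
        simp only [Finset.mem_filter, Finset.mem_univ, true_and, Fin.lt_def]
      rw [hfil2, ← Finset.prod_pow, ← Finset.prod_mul_distrib]
      refine Finset.prod_congr rfl fun j _ => ?_
      rw [← zpow_natCast (L j ^ mm k j) σv, ← zpow_mul, ← zpow_add]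
      congr 1
      rw [Hsh]; ring
    rw [hM, mul_pow, monomial_one_pow, ← Units.val_pow_eq_pow_val, mul_assoc, ← Units.val_mul,
      hU, show (σv • Finsupp.equivFunOnFinite.symm (cp k) : Fin n →₀ ℕ) =
        ee (fun i => σv * cp k i) from smul_ee σv (cp k)]
  rw [filter_succ_eq k, Finset.prod_insert (k_not_mem k), Units.val_mul,
    coeff_exp_prod (rr k) (z k) (hz0 k) M hMc (L k) hu _ (H k) (ee N), deg_ee]
  refine Eq.trans ?_ (part2 rr z cp mm H N k hcp)
  refine Finset.sum_congr rfl fun m hm => ?_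
  rw [Finset.mul_sum]
  refine Finset.sum_congr rfl fun ν hν => ?_
  rw [coeff_C_mul, hstep (sig (rr k) ν), coeff_monomial_mul]
  simp only [one_mul, ee_le_iff, ee_sub]
  rw [show (fun i => N i - sig (rr k) ν * cp k i) = Nsh cp N k (sig (rr k) ν) from rfl,
    IH (Hsh mm H k (sig (rr k) ν)) (Nsh cp N k (sig (rr k) ν)),
    finsum_eq_sum_of_support_subset
      (fun f => W rr z cp mm (k : ℕ) (Hsh mm H k (sig (rr k) ν)) (Nsh cp N k (sig (rr k) ν)) f)
      (s := famSet rr N)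
      (fun f hf => W_supp rr z cp mm hcp N (fun i => Nat.sub_le _ _) hf)]
  by_cases hle : ∀ i, sig (rr k) ν * cp k i ≤ N i
  · rw [if_pos hle]
    simp only [Term2, if_pos hle, Finset.mul_sum]
    exact Finset.sum_congr rfl fun f' _ => by ring
  · rw [if_neg hle]
    simp only [Term2, if_neg hle, mul_zero]
    simp

lemma claim (hz0 : ∀ j, z j 0 = 1) (hcp : ∀ j, ∃ i, cp j i ≠ 0)
    (hL : ∀ l : Fin K, (L l : MvPowerSeries (Fin n) A) =
      ∑ s ∈ Finset.range (rr l + 1), C (σ := Fin n) (R := A) (z l s) *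
        (monomial (R := A) (Finsupp.equivFunOnFinite.symm (cp l)) 1 *
          ((∏ j ∈ Finset.univ.filter (fun j => j < l), L j ^ mm l j :
            (MvPowerSeries (Fin n) A)ˣ) : MvPowerSeries (Fin n) A)) ^ s) :
    ∀ t, t ≤ K → ∀ (H : Fin K → ℤ) (N : Fin n → ℕ),
      coeff (ee N) ((↑(∏ j ∈ univ.filter (fun j : Fin K => (j : ℕ) < t), L j ^ H j) :
        MvPowerSeries (Fin n) A)) = ∑ᶠ f, W rr z cp mm t H N f := by
  intro t
  induction t with
  | zero => intro _ H N; exact claim_zero rr z cp mm L H N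
  | succ t ih =>
    intro ht H N
    have ht' : t < K := by omega
    exact claim_step rr z cp mm L hz0 hcp hL ⟨t, ht'⟩
      (fun H' N' => ih (by omega) H' N') H N

end Claim
end Aux17

/-- **sum form of Gupta's formula.** For a generalized cluster pattern
(the step-`j` data being `r_{(j)} = r_{i_j}`, `c_j⁺`, `ĉ_j⁺ = B₀·c_j⁺`,
`m_{l,j} = (ĉ_l⁺, -d_{(j)}·c_j)_{D₀R}` and `h_j = -(g_K, d_{(j)}·c_j)_{D₀R}`, all assumed
integral), the coefficient of `u^N` in `∏_j L_j^{h_j}` — which represents the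
`F`-polynomial `F_{i_K;t_K}(ŷ,z)` by Gupta's formula — equals the (finitely supported)
sum over all families `(n_s^j)` with `∑_j (∑_s s·n_s^j)·c_j⁺ = N` of
`∏_j {h_j + ∑_{l>j} ∑_s s·n_s^l·m_{l,j}; n_0^j,…,n_{r_{(j)}}^j}·∏_s z_{j,s}^{n_s^j}`. -/
theorem stmt_17 (n K : ℕ) (hn : 1 ≤ n) (hK : 1 ≤ K)
    (r : Fin n → ℕ) (hr : ∀ i, 0 < r i)
    (B₀ : Matrix (Fin n) (Fin n) ℤ)
    (D₀ : Fin n → ℤ) (hD₀ : ∀ i, 0 < D₀ i)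
    (hskew : ∀ i j, D₀ i * (r i : ℤ) * B₀ i j = -(D₀ j * (r j : ℤ) * B₀ j i))
    (idx : ℕ → Fin n) (ε : ℕ → ℤ)
    (hε : ∀ j < K, ε (j + 1) = 1 ∨ ε (j + 1) = -1)
    (B C G : ℕ → Matrix (Fin n) (Fin n) ℤ)
    (hB0 : B 0 = B₀) (hC0 : C 0 = 1) (hG0 : G 0 = 1)
    -- at each step the c-vector is nonzero and sign-coherent with common sign ε_j
    (hcv : ∀ j < K, (∃ l, C j l (idx (j + 1)) ≠ 0) ∧
      ∀ l, 0 ≤ ε (j + 1) * C j l (idx (j + 1)))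
    (hB : ∀ j < K, ∀ (a b : Fin n),
      B (j + 1) a b =
        if a = idx (j + 1) ∨ b = idx (j + 1) then -(B j a b)
        else B j a b + (r (idx (j + 1)) : ℤ) *
          (max (-(B j a (idx (j + 1)))) 0 * B j (idx (j + 1)) b
            + B j a (idx (j + 1)) * max (B j (idx (j + 1)) b) 0))
    (hC : ∀ j < K, ∀ (a b : Fin n),
      C (j + 1) a b =
        if b = idx (j + 1) then -(C j a b)
        else C j a b + (r (idx (j + 1)) : ℤ) *
          (C j a (idx (j + 1)) * max (ε (j + 1) * B j (idx (j + 1)) b) 0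
            + max (-(ε (j + 1) * C j a (idx (j + 1)))) 0 * B j (idx (j + 1)) b))
    (hG : ∀ j < K, ∀ (l i : Fin n),
      G (j + 1) l i =
        if i = idx (j + 1) then
          -(G j l i) + (r (idx (j + 1)) : ℤ) *
            ∑ p, max (-(ε (j + 1) * B j p (idx (j + 1)))) 0 * G j l p
        else G j l i)
    -- the step data for the power-series setting: `r_{(j)}` and `c_j⁺`
    (rr : Fin K → ℕ) (hrr : ∀ j : Fin K, rr j = r (idx ((j : ℕ) + 1)))
    (cp : Fin K → Fin n → ℕ)
    (hcp : ∀ (j : Fin K) (i : Fin n),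
      (cp j i : ℤ) = ε ((j : ℕ) + 1) * C (j : ℕ) i (idx ((j : ℕ) + 1)))
    -- the integers `m_{l,j} = (ĉ_l⁺, -d_{(j)}·c_j)_{D₀R}` for `j < l`
    (mm : Fin K → Fin K → ℤ)
    (hmm : ∀ (l j : Fin K), j < l →
      mm l j * (D₀ (idx ((j : ℕ) + 1)) * (r (idx ((j : ℕ) + 1)) : ℤ)) =
        -(∑ i, B₀.mulVec (fun i' => (cp l i' : ℤ)) i * (D₀ i * (r i : ℤ)) *
            C (j : ℕ) i (idx ((j : ℕ) + 1))))
    -- the integers `h_j = -(g_K, d_{(j)}·c_j)_{D₀R}`, with `g_K = g_{i_K;K}`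
    (hcoef : Fin K → ℤ)
    (hhcoef : ∀ j : Fin K,
      hcoef j * (D₀ (idx ((j : ℕ) + 1)) * (r (idx ((j : ℕ) + 1)) : ℤ)) =
        -(∑ i, G K i (idx K) * (D₀ i * (r i : ℤ)) * C (j : ℕ) i (idx ((j : ℕ) + 1))))
    -- the recursively defined units `L_j`
    (L : Fin K → (MvPowerSeries (Fin n) (ZRing K rr))ˣ)
    (hL : ∀ l : Fin K, (L l : MvPowerSeries (Fin n) (ZRing K rr)) =
      ∑ s ∈ Finset.range (rr l + 1),
        MvPowerSeries.C (σ := Fin n) (R := ZRing K rr) (zpoly rr l s) *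
          (MvPowerSeries.monomial (R := ZRing K rr) (Finsupp.equivFunOnFinite.symm (cp l)) 1 *
            ((∏ j ∈ Finset.univ.filter (fun j => j < l), L j ^ mm l j :
                (MvPowerSeries (Fin n) (ZRing K rr))ˣ) :
              MvPowerSeries (Fin n) (ZRing K rr))) ^ s) :
    ∀ N : Fin n → ℕ,
      MvPowerSeries.coeff (R := ZRing K rr) (Finsupp.equivFunOnFinite.symm N)
        ((∏ j, L j ^ hcoef j : (MvPowerSeries (Fin n) (ZRing K rr))ˣ) :
          MvPowerSeries (Fin n) (ZRing K rr)) =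
      ∑ᶠ f : Fin K → ℕ → ℕ,
        if (∀ (j : Fin K) (s : ℕ), rr j < s → f j s = 0) ∧
            (∀ i : Fin n,
              ∑ j : Fin K, (∑ s ∈ Finset.Icc 1 (rr j), s * f j s) * cp j i = N i) then
          ∏ j : Fin K,
            ((gbracket
                (hcoef j + ∑ l ∈ Finset.univ.filter (fun l => j < l),
                  (∑ s ∈ Finset.Icc 1 (rr l), (s : ℤ) * (f l s : ℤ)) * mm l j)
                (rr j) (f j) : ℤ) : ZRing K rr) *
              ∏ s ∈ Finset.Icc 1 (rr j), zpoly rr j s ^ f j s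
        else 0 := by
  intro N
  have hcp' : ∀ j : Fin K, ∃ i, cp j i ≠ 0 := by
    intro j
    obtain ⟨⟨l, hl⟩, hsc⟩ := hcv (j : ℕ) j.isLt
    refine ⟨l, fun h0 => hl ?_⟩
    have hz : (cp j l : ℤ) = 0 := by exact_mod_cast congrArg (fun x : ℕ => (x : ℤ)) h0
    rw [hcp j l] at hz
    rcases hε (j : ℕ) j.isLt with h | h <;> rw [h] at hz <;> omega
  have hz0 : ∀ j : Fin K, zpoly rr j 0 = 1 := fun j => by
    rw [zpoly, dif_neg]
    simp
  have hclaim := Aux17.claim rr (zpoly rr) cp mm L hz0 hcp' hL K le_rfl hcoef N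
  have hfilK : (Finset.univ.filter fun j : Fin K => (j : ℕ) < K) = Finset.univ := by
    ext j; simpa using j.isLt
  rw [hfilK] at hclaim
  rw [show Finsupp.equivFunOnFinite.symm N = Aux17.ee N from rfl, hclaim]
  refine finsum_congr fun f => ?_
  rw [Aux17.W]
  by_cases hc : Aux17.Wcond rr cp K N f
  · rw [if_pos hc, if_pos (show (∀ (j : Fin K) (s : ℕ), rr j < s → f j s = 0) ∧
        (∀ i : Fin n, ∑ j : Fin K,
          (∑ s ∈ Finset.Icc 1 (rr j), s * f j s) * cp j i = N i) from ⟨hc.1, hc.2.2⟩),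
      Aux17.Wval, hfilK]
    rfl
  · rw [if_neg hc, if_neg]
    rintro ⟨h1, h3⟩
    exact hc ⟨h1, fun j hj s => absurd hj (by have := j.isLt; omega), h3⟩
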